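/- For every positive integer k and real x with |x| ≤ 1, ∫₀^π θ sin θ · (1 + x² cos² θ)^{1/k} dθ = π · ∑_{j=0}^∞ binom(1/k, j) · x^{2j}/(2j+1), where binom(1/k, j) is the generalized binomial coefficient; equivalently this equals π · ₂F₁(1/2, −1/k; 3/2; −x²). -/

import Mathlib

/-- Generalized binomial coefficient `binom a n = a (a-1) ⋯ (a-n+1) / n!`. -/
noncomputable def genBinom (a : ℝ) (n : ℕ) : ℝ :=
  (∏ i ∈ Finset.range n, (a - i)) / n.factorial

open Complex in
lemma iterDeriv_cpow (p : ℝ) (n : ℕ) :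
    ∀ z : ℂ, 0 < (1 + z).re →
      iteratedDeriv n (fun w : ℂ => (1 + w) ^ (p : ℂ)) z
        = (∏ i ∈ Finset.range n, ((p : ℂ) - i)) * (1 + z) ^ ((p : ℂ) - n) := by
  induction n with
  | zero => intro z hz; simp
  | succ n ih =>
    intro z hz
    rw [iteratedDeriv_succ]
    have hopen : IsOpen {w : ℂ | 0 < (1 + w).re} :=
      isOpen_lt continuous_const (by continuity)
    have hev : iteratedDeriv n (fun w : ℂ => (1 + w) ^ (p : ℂ))
        =ᶠ[nhds z] fun w => (∏ i ∈ Finset.range n, ((p : ℂ) - i)) * (1 + w) ^ ((p : ℂ) - n) := by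
      filter_upwards [hopen.mem_nhds hz] with w hw using ih w hw
    rw [hev.deriv_eq]
    have hd : HasDerivAt (fun w : ℂ => (∏ i ∈ Finset.range n, ((p : ℂ) - i))
        * (1 + w) ^ ((p : ℂ) - n))
        ((∏ i ∈ Finset.range n, ((p : ℂ) - i)) * (((p : ℂ) - n) * (1 + z) ^ ((p : ℂ) - n - 1))) z := by
      simpa using (((hasDerivAt_id z).const_add 1).cpow_const (c := (p : ℂ) - n)
        (Or.inl hz)).const_mul (∏ i ∈ Finset.range n, ((p : ℂ) - i))
    rw [hd.deriv, Finset.prod_range_succ]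
    push_cast
    rw [sub_sub]
    ring

open Complex in
lemma genBinom_hasSum (p : ℝ) {t : ℝ} (ht : |t| < 1) :
    HasSum (fun n => genBinom p n * t ^ n) ((1 + t) ^ p) := by
  set r : NNReal := ⟨(|t| + 1) / 2, by positivity⟩ with hr_def
  have htr : |t| < (r : ℝ) := by show |t| < (|t| + 1) / 2; linarith
  have hr1 : (r : ℝ) < 1 := by show (|t| + 1) / 2 < 1; linarith [abs_nonneg t]
  have hrpos : (0:ℝ) < r := (abs_nonneg t).trans_lt htr
  set f : ℂ → ℂ := fun w => (1 + w) ^ (p : ℂ) with hf_def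
  have hre : ∀ z : ℂ, ‖z‖ < 1 → 0 < (1 + z).re := by
    intro z hz
    have h1 : |z.re| ≤ ‖z‖ := abs_re_le_norm z
    simp only [add_re, one_re]
    linarith [(abs_lt.mp (h1.trans_lt hz)).1]
  have hd : DifferentiableOn ℂ f (Metric.closedBall 0 r) := by
    intro z hz
    have hz1 : ‖z‖ < 1 := by
      rw [Metric.mem_closedBall, dist_zero_right] at hz
      exact hz.trans_lt hr1
    exact (((hasDerivAt_id z).const_add 1).cpow_const
      (Or.inl (hre z hz1))).differentiableAt.differentiableWithinAt
  have hball := hd.hasFPowerSeriesOnBall (by exact_mod_cast hrpos)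
  have hy : (t : ℂ) ∈ Metric.eball (0 : ℂ) r := by
    rw [Metric.mem_eball, edist_zero_right]
    exact_mod_cast (show ‖(t:ℂ)‖ < (r:ℝ) by
      rw [Complex.norm_real, Real.norm_eq_abs]; exact htr)
  have hs := hball.hasSum_iteratedFDeriv hy
  have hterm : ∀ n : ℕ, ((n.factorial : ℂ))⁻¹ • iteratedFDeriv ℂ n f 0 (fun _ => (t:ℂ))
      = ((genBinom p n * t ^ n : ℝ) : ℂ) := by
    intro n
    rw [iteratedFDeriv_apply_eq_iteratedDeriv_mul_prod]
    rw [iterDeriv_cpow p n 0 (by simp)]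
    simp only [add_zero, Complex.one_cpow, genBinom]
    rw [Finset.prod_const, Finset.card_fin]
    push_cast
    field_simp
    ring
  simp only [hterm, zero_add] at hs
  have hft : f (t : ℂ) = (((1 + t) ^ p : ℝ) : ℂ) := by
    rw [hf_def]
    have h1t : (0:ℝ) ≤ 1 + t := by have := abs_le.mp ht.le; linarith
    rw [Complex.ofReal_cpow h1t]
    push_cast
    ring_nf
  rw [hft] at hs
  exact_mod_cast hasSum_ofReal.mp hs

lemma genBinom_abs_succ {p : ℝ} (hp0 : 0 < p) (hp1 : p ≤ 1) (n : ℕ) :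
    |genBinom p (n + 1)| = (∏ i ∈ Finset.range n, (1 - p / (i + 1))) * (p / (n + 1)) := by
  have hfac : ∀ i : ℕ, |p - (i + 1 : ℕ)| = (i + 1 : ℝ) - p := by
    intro i
    have hi : (0:ℝ) ≤ (i:ℝ) := Nat.cast_nonneg i
    rw [abs_of_nonpos (by push_cast; linarith)]
    push_cast; ring
  rw [genBinom, Finset.prod_range_succ', abs_div, abs_mul, Finset.abs_prod]
  simp only [hfac]
  rw [Nat.cast_zero, sub_zero, abs_of_pos hp0,
    abs_of_pos (by positivity : (0:ℝ) < ((n+1).factorial : ℝ))]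
  have hb : ∀ i ∈ Finset.range n, (1 : ℝ) - p / (i + 1) = ((i:ℝ) + 1 - p) / ((i:ℝ) + 1) := by
    intro i _
    field_simp
  rw [Finset.prod_congr rfl hb, Finset.prod_div_distrib]
  have hden : (∏ i ∈ Finset.range n, ((i:ℝ) + 1)) = (n.factorial : ℝ) := by
    exact_mod_cast congrArg (Nat.cast (R := ℝ)) (Finset.prod_range_add_one_eq_factorial n)
  rw [hden, Nat.factorial_succ]
  have h2 : ((n.factorial:ℝ)) ≠ 0 := by positivity
  have h3 : ((n:ℝ) + 1) ≠ 0 := by positivity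
  push_cast
  rw [div_mul_div_comm]
  ring

lemma genBinom_summable {p : ℝ} (hp0 : 0 < p) (hp1 : p ≤ 1) :
    Summable fun n => |genBinom p n| := by
  set b : ℕ → ℝ := fun n => ∏ i ∈ Finset.range n, (1 - p / (i + 1)) with hb
  have hbmem : ∀ n, (0:ℝ) ≤ b n ∧ b n ≤ 1 := by
    intro n
    constructor
    · apply Finset.prod_nonneg
      intro i _
      have : p / ((i:ℝ) + 1) ≤ 1 := by
        rw [div_le_one (by positivity)]
        have : (0:ℝ) ≤ (i:ℝ) := Nat.cast_nonneg i
        linarith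
      linarith
    · apply Finset.prod_le_one
      · intro i _
        have : p / ((i:ℝ) + 1) ≤ 1 := by
          rw [div_le_one (by positivity)]
          have : (0:ℝ) ≤ (i:ℝ) := Nat.cast_nonneg i
          linarith
        linarith
      · intro i _
        have : 0 ≤ p / ((i:ℝ) + 1) := by positivity
        linarith
  have hstep : ∀ n, |genBinom p (n + 1)| = b n - b (n + 1) := by
    intro n
    rw [genBinom_abs_succ hp0 hp1 n]
    have : b (n + 1) = b n * (1 - p / (n + 1)) := by
      rw [hb]; exact Finset.prod_range_succ _ n
    rw [this]; ring
  apply summable_of_sum_range_le (c := 2) (fun n => abs_nonneg _)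
  intro n
  cases n with
  | zero => norm_num
  | succ m =>
    rw [Finset.sum_range_succ']
    have h0 : |genBinom p 0| = 1 := by simp [genBinom]
    have hsum : ∑ i ∈ Finset.range m, |genBinom p (i + 1)| = b 0 - b m := by
      simp only [hstep]
      exact Finset.sum_range_sub' b m
    rw [h0, hsum]
    have h1 := hbmem 0
    have h2 := hbmem m
    linarith

open MeasureTheory intervalIntegral in
theorem stmt_12 (k : ℕ) (hk : 0 < k) (x : ℝ) (hx : |x| ≤ 1) :
    ∫ θ in (0:ℝ)..Real.pi,
        θ * Real.sin θ * (1 + x ^ 2 * Real.cos θ ^ 2) ^ ((1 : ℝ) / k)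
      = Real.pi * ∑' j : ℕ, genBinom (1 / k) j * x ^ (2 * j) / (2 * j + 1) := by
  have hk1 : (1:ℝ) ≤ (k:ℝ) := by exact_mod_cast hk
  set p : ℝ := 1 / (k : ℝ) with hp_def
  have hp0 : 0 < p := by rw [hp_def]; positivity
  have hp1 : p ≤ 1 := by rw [hp_def, div_le_one (by linarith)]; exact hk1
  set G : ℝ → ℝ := fun u => (1 + x ^ 2 * u ^ 2) ^ p with hG_def
  have hGpos : ∀ u : ℝ, 0 < 1 + x ^ 2 * u ^ 2 := fun u => by positivity
  have hGc : Continuous G := by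
    rw [hG_def]
    apply Continuous.rpow_const (by continuity)
    intro u; exact Or.inl (hGpos u).ne'
  have hc1 : Continuous fun θ => Real.sin θ * G (Real.cos θ) :=
    Real.continuous_sin.mul (hGc.comp Real.continuous_cos)
  have hc2 : Continuous fun θ => θ * Real.sin θ * G (Real.cos θ) :=
    (continuous_id.mul Real.continuous_sin).mul (hGc.comp Real.continuous_cos)
  set I : ℝ := ∫ θ in (0:ℝ)..Real.pi, Real.sin θ * G (Real.cos θ) with hI_def
  set A : ℝ := ∫ θ in (0:ℝ)..Real.pi, θ * Real.sin θ * G (Real.cos θ) with hA_def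
  -- Step 1: reflection
  have hrefl : A = Real.pi * I - A := by
    have h := intervalIntegral.integral_comp_sub_left (a := (0:ℝ)) (b := Real.pi)
      (fun θ => θ * Real.sin θ * G (Real.cos θ)) Real.pi
    rw [sub_self, sub_zero] at h
    have h2 : (∫ θ in (0:ℝ)..Real.pi, (Real.pi - θ) * Real.sin θ * G (Real.cos θ)) = A := by
      rw [hA_def, ← h]
      apply intervalIntegral.integral_congr
      intro θ _
      simp only [hG_def, Real.sin_pi_sub, Real.cos_pi_sub, neg_sq]
    have h3 : (∫ θ in (0:ℝ)..Real.pi, (Real.pi - θ) * Real.sin θ * G (Real.cos θ))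
        = Real.pi * I - A := by
      rw [hI_def, hA_def, ← intervalIntegral.integral_const_mul,
        ← intervalIntegral.integral_sub ((show Continuous fun θ => Real.pi * (Real.sin θ * G (Real.cos θ)) from continuous_const.mul hc1).intervalIntegrable _ _)
          (hc2.intervalIntegrable _ _)]
      apply intervalIntegral.integral_congr
      intro θ _
      ring
    exact h2.symm.trans h3
  -- Step 2: substitution u = cos θ
  have hsubst : I = ∫ u in (-1:ℝ)..(1:ℝ), G u := by
    have h := intervalIntegral.integral_comp_smul_deriv (a := (0:ℝ)) (b := Real.pi)
      (f := Real.cos) (f' := fun θ => -Real.sin θ) (g := G)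
      (fun θ _ => Real.hasDerivAt_cos θ) (Real.continuous_sin.neg.continuousOn) hGc
    rw [Real.cos_zero, Real.cos_pi] at h
    simp only [smul_eq_mul, neg_mul] at h
    rw [intervalIntegral.integral_neg, intervalIntegral.integral_symm (-1:ℝ) (1:ℝ)] at h
    rw [hI_def]
    exact (neg_inj.mp h)
  -- Step 3: series expansion
  have hle : (-1:ℝ) ≤ 1 := by norm_num
  have hseries : (∫ u in (-1:ℝ)..(1:ℝ), G u)
      = ∑' j : ℕ, 2 * (genBinom p j * x ^ (2 * j) / (2 * (j:ℝ) + 1)) := by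
    rw [intervalIntegral.integral_of_le hle, integral_Ioc_eq_integral_Ioo]
    set F : ℕ → ℝ → ℝ := fun j u => genBinom p j * (x ^ 2 * u ^ 2) ^ j with hF_def
    have hFc : ∀ j, Continuous (F j) := by
      intro j
      exact continuous_const.mul ((continuous_const.mul (continuous_pow 2)).pow j)
    have hFint : ∀ j, IntegrableOn (F j) (Set.Ioo (-1:ℝ) 1) := fun j =>
      ((hFc j).integrableOn_Icc).mono_set Set.Ioo_subset_Icc_self
    have hbound : ∀ j, (∫ u in Set.Ioo (-1:ℝ) 1, ‖F j u‖) ≤ |genBinom p j| * 2 := by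
      intro j
      have hptb : ∀ u ∈ Set.Ioo (-1:ℝ) 1, ‖F j u‖ ≤ |genBinom p j| := by
        intro u hu
        rw [Real.norm_eq_abs, hF_def]
        simp only
        rw [abs_mul]
        have h1 : |(x ^ 2 * u ^ 2) ^ j| ≤ 1 := by
          rw [abs_pow]
          apply pow_le_one₀ (abs_nonneg _)
          have hx2 : x ^ 2 ≤ 1 := by nlinarith [abs_le.mp hx]
          have hu2 : u ^ 2 ≤ 1 := by nlinarith [hu.1, hu.2]
          rw [abs_of_nonneg (by positivity)]
          nlinarith [sq_nonneg x, sq_nonneg u]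
        nlinarith [abs_nonneg (genBinom p j)]
      calc (∫ u in Set.Ioo (-1:ℝ) 1, ‖F j u‖)
          ≤ ∫ _u in Set.Ioo (-1:ℝ) 1, |genBinom p j| := by
            apply setIntegral_mono_on (hFint j).norm
              ((integrableOn_const_iff).mpr (Or.inr (by simp [Real.volume_Ioo])))
              measurableSet_Ioo hptb
        _ = |genBinom p j| * 2 := by
            rw [setIntegral_const]
            simp [Real.volume_Ioo]
            norm_num
            ring
    have hsum : Summable fun j => ∫ u in Set.Ioo (-1:ℝ) 1, ‖F j u‖ :=
      Summable.of_nonneg_of_le (fun j => integral_nonneg fun u => norm_nonneg _) hbound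
        ((genBinom_summable hp0 hp1).mul_right 2)
    have hpt : Set.EqOn G (fun u => ∑' j, F j u) (Set.Ioo (-1:ℝ) 1) := by
      intro u hu
      have hu1 : |u| < 1 := abs_lt.mpr ⟨hu.1, hu.2⟩
      have ht : |x ^ 2 * u ^ 2| < 1 := by
        rw [abs_of_nonneg (by positivity)]
        have hx2 : x ^ 2 ≤ 1 := by nlinarith [abs_le.mp hx]
        have hu2 : u ^ 2 < 1 := by nlinarith [abs_lt.mp hu1]
        nlinarith [sq_nonneg x, sq_nonneg u]
      exact ((genBinom_hasSum p ht).tsum_eq).symm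
    rw [setIntegral_congr_fun measurableSet_Ioo hpt,
      ← MeasureTheory.integral_tsum_of_summable_integral_norm hFint hsum]
    congr 1
    funext j
    have hterm : ∀ u : ℝ, F j u = (genBinom p j * x ^ (2 * j)) * u ^ (2 * j) := by
      intro u
      rw [hF_def]
      simp only
      rw [mul_pow, ← pow_mul, ← pow_mul]
      ring
    rw [← integral_Ioc_eq_integral_Ioo, ← intervalIntegral.integral_of_le hle]
    simp only [hterm]
    rw [intervalIntegral.integral_const_mul, integral_pow]
    have hodd : (-1:ℝ) ^ (2 * j + 1) = -1 := Odd.neg_one_pow ⟨j, by ring⟩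
    rw [one_pow, hodd]
    have hd : (2 * (j:ℝ) + 1) ≠ 0 := by positivity
    push_cast
    field_simp
    ring
  have hA2 : A = Real.pi / 2 * I := by linarith
  show A = _
  rw [hA2, hsubst, hseries, tsum_mul_left]
  ring
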